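/- For each t ∈ [0,1), the set S = {t ∈ [0,1) : tT has a (unique) fixed point in Int(G)} is open in [0,1). In detail: if t₀ ∈ S with fixed point x_{t₀} and B[x_{t₀}, r] ⊆ Int(G), then every t ∈ [0,1) with |t − t₀| < min{r(1−q)/(1+‖Tx_{t₀}‖), q − t₀} (for any q ∈ (t₀,1)) belongs to S. -/

import Mathlib

/-- Openness of `S`: if `t₀T` has fixed point `x₀ ∈ Int G`, `B[x₀,r] ⊆ Int G`,
`t₀ < q < 1`, then each `t ∈ [0,1)` with
`|t-t₀| < min (r(1-q)/(1+‖Tx₀‖)) (q-t₀)` belongs to `S`. -/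
theorem stmt_8 {Y : Type*} [NormedAddCommGroup Y] [NormedSpace ℝ Y] [CompleteSpace Y]
    (G : Set Y) (hGne : G.Nonempty) (h0 : (0:Y) ∈ interior G)
    (T : Y → Y)
    (hT : ∀ x ∈ closure G, ∀ y ∈ closure G, ‖T x - T y‖ ≤ ‖x - y‖)
    (t₀ : ℝ) (ht₀ : t₀ ∈ Set.Ico (0:ℝ) 1)
    (x₀ : Y) (hx₀ : x₀ ∈ interior G) (hfix : t₀ • T x₀ = x₀)
    (r : ℝ) (hr : 0 < r) (hball : Metric.closedBall x₀ r ⊆ interior G)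
    (q : ℝ) (hq : t₀ < q) (hq1 : q < 1) :
    ∀ t ∈ Set.Ico (0:ℝ) 1,
      |t - t₀| < min (r * (1 - q) / (1 + ‖T x₀‖)) (q - t₀) →
      ∃ x ∈ interior G, t • T x = x ∧
        ∀ y ∈ closure G, t • T y = y → y = x := by
  intro t ht hlt
  have ht0 : (0:ℝ) ≤ t := ht.1
  have ht1 : t < 1 := ht.2
  have htq : t < q := by
    have h1 : t - t₀ ≤ |t - t₀| := le_abs_self _
    have h2 : |t - t₀| < q - t₀ := lt_of_lt_of_le hlt (min_le_right _ _)
    linarith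
  have hq0 : 0 ≤ q := le_trans ht₀.1 hq.le
  have hTnorm : (0:ℝ) < 1 + ‖T x₀‖ := by positivity
  have hsmall : |t - t₀| * (1 + ‖T x₀‖) < r * (1 - q) := by
    have h1 : |t - t₀| < r * (1 - q) / (1 + ‖T x₀‖) :=
      lt_of_lt_of_le hlt (min_le_left _ _)
    calc |t - t₀| * (1 + ‖T x₀‖) < (r * (1 - q) / (1 + ‖T x₀‖)) * (1 + ‖T x₀‖) := by
          exact mul_lt_mul_of_pos_right h1 hTnorm
      _ = r * (1 - q) := by field_simp
  -- membership in closure G for points of the ball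
  have hmemcl : ∀ x ∈ Metric.closedBall x₀ r, x ∈ closure G := fun x hx =>
    subset_closure (interior_subset (hball hx))
  have hx₀cl : x₀ ∈ closure G := subset_closure (interior_subset hx₀)
  -- the ball is mapped into itself
  have hmaps : ∀ x ∈ Metric.closedBall x₀ r, t • T x ∈ Metric.closedBall x₀ r := by
    intro x hx
    have hxcl := hmemcl x hx
    have hxdist : ‖x - x₀‖ ≤ r := by
      simpa [dist_eq_norm] using (Metric.mem_closedBall.mp hx)
    have key : ‖t • T x - x₀‖ ≤ r := by
      have heq : t • (T x - T x₀) + (t - t₀) • T x₀ = t • T x - t₀ • T x₀ := by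
        module
      rw [hfix] at heq
      rw [← heq]
      calc ‖t • (T x - T x₀) + (t - t₀) • T x₀‖
          ≤ ‖t • (T x - T x₀)‖ + ‖(t - t₀) • T x₀‖ := norm_add_le _ _
        _ = t * ‖T x - T x₀‖ + |t - t₀| * ‖T x₀‖ := by
            rw [norm_smul, norm_smul, Real.norm_eq_abs, Real.norm_eq_abs,
              abs_of_nonneg ht0]
        _ ≤ q * r + |t - t₀| * (1 + ‖T x₀‖) := by
            have h1 : ‖T x - T x₀‖ ≤ ‖x - x₀‖ := hT x hxcl x₀ hx₀cl
            have h2 : t * ‖T x - T x₀‖ ≤ q * r := by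
              have := le_trans h1 hxdist
              nlinarith [norm_nonneg (T x - T x₀)]
            have h3 : |t - t₀| * ‖T x₀‖ ≤ |t - t₀| * (1 + ‖T x₀‖) := by
              nlinarith [abs_nonneg (t - t₀)]
            linarith
        _ ≤ q * r + r * (1 - q) := by linarith
        _ = r := by ring
    simpa [Metric.mem_closedBall, dist_eq_norm] using key
  -- set up contraction on the closed ball
  haveI : CompleteSpace (Metric.closedBall x₀ r) :=
    Metric.isClosed_closedBall.completeSpace_coe
  haveI : Nonempty (Metric.closedBall x₀ r) :=
    ⟨⟨x₀, Metric.mem_closedBall_self hr.le⟩⟩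
  set f : Metric.closedBall x₀ r → Metric.closedBall x₀ r :=
    fun x => ⟨t • T x, hmaps x x.2⟩ with hf
  set qn : NNReal := ⟨q, hq0⟩ with hqn
  have hcontr : ContractingWith qn f := by
    constructor
    · exact_mod_cast hq1
    · intro a b
      rw [edist_dist, edist_dist]
      have hd : dist (f a) (f b) ≤ q * dist a b := by
        have : dist (f a) (f b) = ‖t • T a - t • T b‖ := by
          rw [Subtype.dist_eq, dist_eq_norm]
        rw [this, Subtype.dist_eq, dist_eq_norm]
        have h1 : ‖T (a:Y) - T (b:Y)‖ ≤ ‖(a:Y) - (b:Y)‖ :=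
          hT _ (hmemcl _ a.2) _ (hmemcl _ b.2)
        calc ‖t • T (a:Y) - t • T (b:Y)‖ = t * ‖T (a:Y) - T (b:Y)‖ := by
              rw [← smul_sub, norm_smul, Real.norm_eq_abs, abs_of_nonneg ht0]
          _ ≤ q * ‖(a:Y) - (b:Y)‖ := by
              nlinarith [norm_nonneg (T (a:Y) - T (b:Y)), norm_nonneg ((a:Y) - (b:Y))]
      calc ENNReal.ofReal (dist (f a) (f b)) ≤ ENNReal.ofReal (q * dist a b) :=
            ENNReal.ofReal_le_ofReal hd
        _ = ENNReal.ofReal q * ENNReal.ofReal (dist a b) :=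
            ENNReal.ofReal_mul hq0
        _ = (qn : ENNReal) * ENNReal.ofReal (dist a b) := by
            rw [hqn, ENNReal.ofReal_eq_coe_nnreal hq0]; rfl
  set x := ContractingWith.fixedPoint f hcontr with hxdef
  have hfx : f x = x := hcontr.fixedPoint_isFixedPt
  refine ⟨x, hball x.2, ?_, ?_⟩
  · have := congrArg Subtype.val hfx
    simpa [hf] using this
  · intro y hy hyfix
    have hxval : t • T (x:Y) = x := by
      have := congrArg Subtype.val hfx
      simpa [hf] using this
    have hd : ‖y - (x:Y)‖ ≤ t * ‖y - (x:Y)‖ := by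
      calc ‖y - (x:Y)‖ = ‖t • T y - t • T (x:Y)‖ := by rw [hyfix, hxval]
        _ = t * ‖T y - T (x:Y)‖ := by
            rw [← smul_sub, norm_smul, Real.norm_eq_abs, abs_of_nonneg ht0]
        _ ≤ t * ‖y - (x:Y)‖ := by
            have := hT y hy (x:Y) (hmemcl _ x.2)
            nlinarith
    have : ‖y - (x:Y)‖ = 0 := by nlinarith [norm_nonneg (y - (x:Y))]
    exact sub_eq_zero.mp (norm_eq_zero.mp this)
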